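/- arXiv:math-ph/0511023 — 2 statements merged into one kernel-verified Lean document; each statement's English description precedes it below -/
import Mathlib

section
/- Let Ω be a bounded self-adjoint operator on a Hilbert space H and S ⊆ H. Then the orbit O_Ω(S), defined as the smallest closed subspace containing S and invariant under Ω, equals the smallest closed subspace containing S that is invariant under the resolvent (Ω - i)⁻¹. -/
open ContinuousLinearMap MeasureTheory

/-- The orbit of a set `S` under an operator `Ω`: the smallest closed `Ω`-invariant
subspace containing `S`. -/
noncomputable def orbit {H : Type*} [NormedAddCommGroup H] [InnerProductSpace ℂ H]
    (Ω : H →L[ℂ] H) (S : Set H) : Submodule ℂ H :=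
  sInf {K : Submodule ℂ H | S ⊆ K ∧ IsClosed (K : Set H) ∧ ∀ x ∈ K, Ω x ∈ K}

namespace OrbitAux

variable {H : Type*} [NormedAddCommGroup H] [InnerProductSpace ℂ H] [CompleteSpace H]

local notation "⟪" x ", " y "⟫" => @inner ℂ _ _ x y

/-- A closed submodule contains sums of its elements. -/
lemma mem_of_hasSum {K : Submodule ℂ H} (hK : IsClosed (K : Set H)) {f : ℕ → H} {a : H}
    (h : HasSum f a) (hf : ∀ n, f n ∈ K) : a ∈ K := by
  refine hK.mem_of_tendsto h.tendsto_sum_nat (Filter.Eventually.of_forall fun n => ?_)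
  exact Submodule.sum_mem K fun i _ => hf i

/-- Neumann series: perturbing an invertible operator whose inverse preserves `K` by a
small operator preserving `K` yields an invertible operator whose inverse preserves `K`. -/
lemma inverse_sub (K : Submodule ℂ H) (hK : IsClosed (K : Set H))
    (B S C : H →L[ℂ] H) (hBS : B * S = 1) (hSB : S * B = 1)
    (hS : ∀ x ∈ K, S x ∈ K) (hC : ∀ x ∈ K, C x ∈ K)
    (hn : ‖S‖ * ‖C‖ < 1) :
    ∃ S' : H →L[ℂ] H, (B - C) * S' = 1 ∧ S' * (B - C) = 1 ∧ ∀ x ∈ K, S' x ∈ K := by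
  have hSC : ‖S * C‖ < 1 := lt_of_le_of_lt (norm_mul_le S C) hn
  have hCS : ‖C * S‖ < 1 :=
    lt_of_le_of_lt (norm_mul_le C S) (by rw [mul_comm ‖C‖]; exact hn)
  set u : (H →L[ℂ] H)ˣ := Units.oneSub (S * C) hSC with hu
  set v : (H →L[ℂ] H)ˣ := Units.oneSub (C * S) hCS with hv
  have hfact₁ : S * (B - C) = (u : H →L[ℂ] H) := by
    rw [mul_sub, hSB]; rfl
  have hfact₂ : (B - C) * S = (v : H →L[ℂ] H) := by
    rw [sub_mul, hBS]; rfl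
  have hleft : ((↑u⁻¹ : H →L[ℂ] H) * S) * (B - C) = 1 := by
    rw [mul_assoc, hfact₁, ← Units.val_mul, inv_mul_cancel u, Units.val_one]
  have hright : (B - C) * (S * (↑v⁻¹ : H →L[ℂ] H)) = 1 := by
    rw [← mul_assoc, hfact₂, ← Units.val_mul, mul_inv_cancel v, Units.val_one]
  have heq : (↑u⁻¹ : H →L[ℂ] H) * S = S * (↑v⁻¹ : H →L[ℂ] H) :=
    left_inv_eq_right_inv hleft hright
  refine ⟨(↑u⁻¹ : H →L[ℂ] H) * S, by rw [heq]; exact hright, hleft, ?_⟩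
  intro x hx
  have hterm : ∀ n : ℕ, ((S * C) ^ n) (S x) ∈ K := by
    intro n
    induction n with
    | zero => simpa using hS x hx
    | succ n ih =>
      rw [pow_succ']
      rw [ContinuousLinearMap.mul_apply, ContinuousLinearMap.mul_apply]
      exact hS _ (hC _ ih)
  have hsum : HasSum (fun n : ℕ => (S * C) ^ n) (↑u⁻¹ : H →L[ℂ] H) :=
    (summable_geometric_of_norm_lt_one hSC).hasSum
  have hsum' : HasSum (fun n : ℕ => ((S * C) ^ n) (S x)) ((↑u⁻¹ : H →L[ℂ] H) (S x)) := by
    have := hsum.map (ContinuousLinearMap.apply ℂ H (S x))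
      (ContinuousLinearMap.apply ℂ H (S x)).continuous
    simpa only [Function.comp_def, ContinuousLinearMap.apply_apply] using this
  have : (↑u⁻¹ : H →L[ℂ] H) (S x) ∈ K := mem_of_hasSum hK hsum' hterm
  simpa [mul_apply] using this

variable (Ω : H →L[ℂ] H)

/-- `Ω - i t`. -/
noncomputable def Dop (t : ℝ) : H →L[ℂ] H := Ω - (Complex.I * (t : ℂ)) • 1

lemma Dop_apply (t : ℝ) (y : H) : Dop Ω t y = Ω y - (Complex.I * (t : ℂ)) • y := by
  simp [Dop]

/-- Lower bound from self-adjointness: `t ‖y‖ ≤ ‖(Ω - i t) y‖` for `t > 0`. -/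
lemma lower_bound (hΩ : IsSelfAdjoint Ω) {t : ℝ} (ht : 0 < t) (y : H) :
    t * ‖y‖ ≤ ‖Dop Ω t y‖ := by
  rcases eq_or_ne y 0 with rfl | hy
  · simp
  have hy' : 0 < ‖y‖ := norm_pos_iff.mpr hy
  have hsym : (Ω : H →ₗ[ℂ] H).IsSymmetric := isSelfAdjoint_iff_isSymmetric.mp hΩ
  have hreal : (⟪y, Ω y⟫).im = 0 := by
    have h1 : (starRingEnd ℂ) ⟪y, Ω y⟫ = ⟪y, Ω y⟫ := by
      rw [inner_conj_symm]
      exact hsym y y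
    exact Complex.conj_eq_iff_im.mp h1
  have hinner : ⟪y, Dop Ω t y⟫ = ⟪y, Ω y⟫ - (Complex.I * (t : ℂ)) * ((‖y‖ : ℂ) ^ 2) := by
    rw [Dop_apply, inner_sub_right, inner_smul_right, inner_self_eq_norm_sq_to_K]
    norm_cast
  have him : (⟪y, Dop Ω t y⟫).im = -(t * ‖y‖ ^ 2) := by
    rw [hinner, ← Complex.ofReal_pow]
    simp [Complex.sub_im, Complex.mul_im, hreal]
    left
    norm_cast
  have h2 : t * ‖y‖ ^ 2 ≤ ‖⟪y, Dop Ω t y⟫‖ := by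
    have := Complex.abs_im_le_norm ⟪y, Dop Ω t y⟫
    rw [him] at this
    rw [abs_neg, abs_of_nonneg (by positivity : (0:ℝ) ≤ t * ‖y‖ ^ 2)] at this
    simpa using this
  have h3 : ‖⟪y, Dop Ω t y⟫‖ ≤ ‖y‖ * ‖Dop Ω t y‖ := norm_inner_le_norm y _
  have h4 : t * ‖y‖ ^ 2 ≤ ‖y‖ * ‖Dop Ω t y‖ := h2.trans h3
  nlinarith [norm_nonneg (Dop Ω t y)]

/-- Norm bound for any right "inverse" of `Ω - i t`. -/
lemma norm_inv_le (hΩ : IsSelfAdjoint Ω) {t : ℝ} (ht : 0 < t) {St : H →L[ℂ] H}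
    (hBS : Dop Ω t * St = 1) : ‖St‖ ≤ 1 / t := by
  refine opNorm_le_bound St (by positivity) fun x => ?_
  have h1 := lower_bound Ω hΩ ht (St x)
  have h2 : Dop Ω t (St x) = x := by
    rw [← ContinuousLinearMap.mul_apply, hBS, ContinuousLinearMap.one_apply]
  rw [h2] at h1
  rw [div_mul_eq_mul_div, le_div_iff₀ ht]
  linarith [h1]

/-- `P Ω K t`: `Ω - i t` has a two-sided inverse preserving `K`. -/
def P (K : Submodule ℂ H) (t : ℝ) : Prop :=
  ∃ St : H →L[ℂ] H, Dop Ω t * St = 1 ∧ St * Dop Ω t = 1 ∧ ∀ x ∈ K, St x ∈ K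

lemma step (hΩ : IsSelfAdjoint Ω) (K : Submodule ℂ H) (hK : IsClosed (K : Set H))
    {t s : ℝ} (ht : 0 < t) (hst : |s - t| ≤ t / 2) (h : P Ω K t) : P Ω K s := by
  obtain ⟨St, h1, h2, h3⟩ := h
  have hnSt : ‖St‖ ≤ 1 / t := norm_inv_le Ω hΩ ht h1
  set C : H →L[ℂ] H := (Complex.I * ((s : ℂ) - (t : ℂ))) • 1 with hCdef
  have hC : ∀ x ∈ K, C x ∈ K := by
    intro x hx
    have : C x = (Complex.I * ((s : ℂ) - (t : ℂ))) • x := by simp [hCdef]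
    rw [this]
    exact K.smul_mem _ hx
  have hnC : ‖C‖ ≤ |s - t| := by
    have h5 : ‖(Complex.I * ((s : ℂ) - (t : ℂ)))‖ = |s - t| := by
      rw [norm_mul, Complex.norm_I, one_mul]
      push_cast
      rw [← Complex.ofReal_sub, Complex.norm_real, Real.norm_eq_abs]
    calc ‖C‖ ≤ ‖(Complex.I * ((s : ℂ) - (t : ℂ)))‖ * ‖(1 : H →L[ℂ] H)‖ := norm_smul_le _ _
      _ ≤ |s - t| * 1 := by
          apply mul_le_mul (le_of_eq h5) (by simpa [ContinuousLinearMap.one_def] using ContinuousLinearMap.norm_id_le (E := H)) (norm_nonneg _)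
            (abs_nonneg _)
      _ = |s - t| := mul_one _
  have hprod : ‖St‖ * ‖C‖ < 1 := by
    have habs : (0:ℝ) ≤ |s - t| := abs_nonneg _
    have h6 : ‖St‖ * ‖C‖ ≤ (1 / t) * (t / 2) := by
      apply mul_le_mul hnSt (hnC.trans hst) (norm_nonneg _) (by positivity)
    have h7 : (1 / t) * (t / 2) = 1 / 2 := by field_simp
    rw [h7] at h6
    linarith
  have hfact : Dop Ω s = Dop Ω t - C := by
    rw [Dop, Dop, hCdef, sub_sub, ← add_smul]
    congr 1
    push_cast
    ring
  obtain ⟨S', hS1, hS2, hS3⟩ := inverse_sub K hK (Dop Ω t) St C h1 h2 h3 hC hprod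
  exact ⟨S', by rw [hfact]; exact hS1, by rw [hfact]; exact hS2, hS3⟩

lemma stepIff (hΩ : IsSelfAdjoint Ω) (K : Submodule ℂ H) (hK : IsClosed (K : Set H))
    {t s : ℝ} (ht : 0 < t) (hst : |s - t| ≤ t / 3) : P Ω K t ↔ P Ω K s := by
  obtain ⟨ha, hb⟩ := abs_le.mp hst
  have hs : 0 < s := by linarith
  constructor
  · exact step Ω hΩ K hK ht (by rw [abs_le]; constructor <;> linarith)
  · exact step Ω hΩ K hK hs (by rw [abs_le]; constructor <;> linarith)

lemma chain (hΩ : IsSelfAdjoint Ω) (K : Submodule ℂ H) (hK : IsClosed (K : Set H)) :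
    ∀ t : ℝ, 1 ≤ t → (P Ω K t ↔ P Ω K 1) := by
  have key : ∀ n : ℕ, ∀ t : ℝ, 1 ≤ t → t ≤ (3/2) ^ n → (P Ω K t ↔ P Ω K 1) := by
    intro n
    induction n with
    | zero =>
      intro t h1 h2
      rw [pow_zero] at h2
      rw [le_antisymm h2 h1]
    | succ n ih =>
      intro t h1 h2
      by_cases hc : t ≤ (3/2) ^ n
      · exact ih t h1 hc
      · push_neg at hc
        have hpow1 : (1:ℝ) ≤ (3/2) ^ n := one_le_pow₀ (by norm_num)
        set s := max 1 (2 * t / 3) with hsdef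
        have hs1 : (1:ℝ) ≤ s := le_max_left _ _
        have hsn : s ≤ (3/2) ^ n := by
          apply max_le hpow1
          have := pow_succ (3/2:ℝ) n
          nlinarith
        have hstep : |s - t| ≤ t / 3 := by
          rcases le_total 1 (2 * t / 3) with hcase | hcase
          · rw [hsdef, max_eq_right hcase, abs_le]
            constructor <;> linarith
          · rw [hsdef, max_eq_left hcase, abs_le]
            constructor <;> linarith
        exact (stepIff Ω hΩ K hK (by linarith) hstep).trans (ih s hs1 hsn)
  intro t ht
  obtain ⟨n, hn⟩ := pow_unbounded_of_one_lt t (by norm_num : (1:ℝ) < 3/2)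
  exact key n t ht hn.le

lemma omega_inv (hΩ : IsSelfAdjoint Ω) (K : Submodule ℂ H) (hK : IsClosed (K : Set H))
    (h : ∀ t : ℝ, 1 ≤ t → P Ω K t) : ∀ x ∈ K, Ω x ∈ K := by
  intro x hx
  have hex : ∀ n : ℕ, ∃ St : H →L[ℂ] H, Dop Ω ((n:ℝ)+1) * St = 1 ∧ St * Dop Ω ((n:ℝ)+1) = 1 ∧
      ∀ y ∈ K, St y ∈ K := by
    intro n
    exact h ((n:ℝ)+1) (by have := Nat.cast_nonneg (α := ℝ) n; linarith)
  choose Sn h1 h2 h3 using hex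
  set w : ℕ → H := fun n => (Complex.I * (((n:ℝ)+1 : ℝ) : ℂ)) • Sn n x with hwdef
  have hwK : ∀ n, w n ∈ K := fun n => K.smul_mem _ (h3 n x hx)
  have hpos : ∀ n : ℕ, (0:ℝ) < (n:ℝ) + 1 := fun n => by positivity
  have key : ∀ n, w n + x = Ω (Sn n x) := by
    intro n
    have hD : Dop Ω ((n:ℝ)+1) (Sn n x) = x := by
      rw [← ContinuousLinearMap.mul_apply, h1 n, ContinuousLinearMap.one_apply]
    have := Dop_apply Ω ((n:ℝ)+1) (Sn n x)
    rw [hD] at this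
    rw [eq_comm, sub_eq_iff_eq_add] at this
    simp only [hwdef]
    rw [this]
    abel
  have hnorm : ∀ n, ‖Sn n x‖ ≤ 1 / ((n:ℝ)+1) * ‖x‖ := by
    intro n
    calc ‖Sn n x‖ ≤ ‖Sn n‖ * ‖x‖ := le_opNorm _ _
      _ ≤ 1 / ((n:ℝ)+1) * ‖x‖ := by
          apply mul_le_mul_of_nonneg_right (norm_inv_le Ω hΩ (hpos n) (h1 n)) (norm_nonneg _)
  have hw_tend : Filter.Tendsto w Filter.atTop (nhds (-x)) := by
    rw [tendsto_iff_norm_sub_tendsto_zero]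
    have hb : ∀ n, ‖w n - (-x)‖ ≤ ‖Ω‖ * ‖x‖ * (1 / ((n:ℝ)+1)) := by
      intro n
      have : w n - (-x) = Ω (Sn n x) := by rw [sub_neg_eq_add, key n]
      rw [this]
      calc ‖Ω (Sn n x)‖ ≤ ‖Ω‖ * ‖Sn n x‖ := le_opNorm _ _
        _ ≤ ‖Ω‖ * (1 / ((n:ℝ)+1) * ‖x‖) :=
            mul_le_mul_of_nonneg_left (hnorm n) (norm_nonneg _)
        _ = ‖Ω‖ * ‖x‖ * (1 / ((n:ℝ)+1)) := by ring
    have hz : Filter.Tendsto (fun n : ℕ => ‖Ω‖ * ‖x‖ * (1 / ((n:ℝ)+1)))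
        Filter.atTop (nhds 0) := by
      have := tendsto_one_div_add_atTop_nhds_zero_nat (𝕜 := ℝ)
      simpa using this.const_mul (‖Ω‖ * ‖x‖)
    exact squeeze_zero (fun n => norm_nonneg _) hb hz
  have hΩw : ∀ n, Ω (w n) ∈ K := by
    intro n
    have : Ω (w n) = (Complex.I * (((n:ℝ)+1 : ℝ) : ℂ)) • (w n + x) := by
      rw [key n, hwdef]
      simp [_root_.map_smul]
    rw [this]
    exact K.smul_mem _ (K.add_mem (hwK n) hx)
  have htend : Filter.Tendsto (fun n => Ω (w n)) Filter.atTop (nhds (Ω (-x))) :=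
    (Ω.continuous.tendsto _).comp hw_tend
  have hmem : Ω (-x) ∈ K := hK.mem_of_tendsto htend (Filter.Eventually.of_forall hΩw)
  have : -(Ω x) ∈ K := by simpa using hmem
  simpa using K.neg_mem this

lemma Dop_one : Dop Ω 1 = Ω - Complex.I • (1 : H →L[ℂ] H) := by
  rw [Dop]
  norm_num

end OrbitAux

/-- for a bounded self-adjoint `Ω`, the smallest closed `Ω`-invariant subspace
containing `S` equals the smallest closed subspace containing `S` invariant under the
resolvent `(Ω - i)⁻¹`. -/
theorem orbit_eq_resolvent_orbit {H : Type*} [NormedAddCommGroup H] [InnerProductSpace ℂ H]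
    [CompleteSpace H] (Ω : H →L[ℂ] H) (hΩ : IsSelfAdjoint Ω) (S : Set H)
    (R : H →L[ℂ] H)
    (hR₁ : (Ω - Complex.I • (1 : H →L[ℂ] H)) ∘L R = 1)
    (hR₂ : R ∘L (Ω - Complex.I • (1 : H →L[ℂ] H)) = 1) :
    orbit Ω S =
      sInf {K : Submodule ℂ H | S ⊆ K ∧ IsClosed (K : Set H) ∧ ∀ x ∈ K, R x ∈ K} := by
  have hR₁' : (Ω - Complex.I • (1 : H →L[ℂ] H)) * R = 1 := hR₁
  have hR₂' : R * (Ω - Complex.I • (1 : H →L[ℂ] H)) = 1 := hR₂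
  have hseteq : {K : Submodule ℂ H | S ⊆ K ∧ IsClosed (K : Set H) ∧ ∀ x ∈ K, Ω x ∈ K}
      = {K : Submodule ℂ H | S ⊆ K ∧ IsClosed (K : Set H) ∧ ∀ x ∈ K, R x ∈ K} := by
    ext K
    simp only [Set.mem_setOf_eq]
    refine and_congr_right fun _ => and_congr_right fun hK => ⟨?_, ?_⟩
    · intro hΩinv
      -- P Ω K T for T = ‖Ω‖ + 1, via Neumann series around the scalar -i T
      set T : ℝ := ‖Ω‖ + 1 with hT
      have hT1 : (1:ℝ) ≤ T := by have := norm_nonneg Ω; linarith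
      have hT0 : (0:ℝ) < T := by linarith
      set c : ℂ := Complex.I * (T : ℂ) with hc
      have hc0 : c ≠ 0 := by
        rw [hc]
        apply mul_ne_zero Complex.I_ne_zero
        exact_mod_cast ne_of_gt hT0
      have hcn : ‖c‖ = T := by
        rw [hc, norm_mul, Complex.norm_I, one_mul, Complex.norm_real, Real.norm_eq_abs,
          abs_of_pos hT0]
      have hBS : ((-c) • (1 : H →L[ℂ] H)) * ((-c)⁻¹ • (1 : H →L[ℂ] H)) = 1 := by
        rw [smul_mul_smul_comm, mul_one, mul_inv_cancel₀ (neg_ne_zero.mpr hc0), one_smul]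
      have hSB : ((-c)⁻¹ • (1 : H →L[ℂ] H)) * ((-c) • (1 : H →L[ℂ] H)) = 1 := by
        rw [smul_mul_smul_comm, mul_one, inv_mul_cancel₀ (neg_ne_zero.mpr hc0), one_smul]
      have hSmem : ∀ x ∈ K, ((-c)⁻¹ • (1 : H →L[ℂ] H)) x ∈ K := by
        intro x hx
        have : ((-c)⁻¹ • (1 : H →L[ℂ] H)) x = (-c)⁻¹ • x := by simp
        rw [this]; exact K.smul_mem _ hx
      have hCmem : ∀ x ∈ K, (-Ω) x ∈ K := by
        intro x hx
        have : (-Ω) x = -(Ω x) := rfl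
        rw [this]; exact K.neg_mem (hΩinv x hx)
      have hnS : ‖(-c)⁻¹ • (1 : H →L[ℂ] H)‖ ≤ 1 / T := by
        calc ‖(-c)⁻¹ • (1 : H →L[ℂ] H)‖ ≤ ‖(-c)⁻¹‖ * ‖(1 : H →L[ℂ] H)‖ := norm_smul_le _ _
          _ ≤ (1 / T) * 1 := by
              apply mul_le_mul _ (by simpa [ContinuousLinearMap.one_def] using
                ContinuousLinearMap.norm_id_le (E := H)) (norm_nonneg _) (by positivity)
              rw [norm_inv, norm_neg, hcn, one_div]
          _ = 1 / T := mul_one _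
      have hprod : ‖(-c)⁻¹ • (1 : H →L[ℂ] H)‖ * ‖-Ω‖ < 1 := by
        have h8 : ‖-Ω‖ = ‖Ω‖ := norm_neg Ω
        have h9 : ‖(-c)⁻¹ • (1 : H →L[ℂ] H)‖ * ‖-Ω‖ ≤ (1 / T) * ‖Ω‖ := by
          rw [h8]
          exact mul_le_mul_of_nonneg_right hnS (norm_nonneg _)
        have h10 : (1 / T) * ‖Ω‖ < 1 := by
          rw [div_mul_eq_mul_div, one_mul, div_lt_one hT0]
          linarith
        linarith
      obtain ⟨S', hS1, hS2, hS3⟩ := OrbitAux.inverse_sub K hK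
        ((-c) • (1 : H →L[ℂ] H)) ((-c)⁻¹ • (1 : H →L[ℂ] H)) (-Ω) hBS hSB hSmem hCmem hprod
      have hfact : ((-c) • (1 : H →L[ℂ] H)) - (-Ω) = OrbitAux.Dop Ω T := by
        rw [OrbitAux.Dop, hc, sub_neg_eq_add, neg_smul]
        abel
      have hPT : OrbitAux.P Ω K T := by
        rw [hfact] at hS1 hS2
        exact ⟨S', hS1, hS2, hS3⟩
      have hP1 : OrbitAux.P Ω K 1 := (OrbitAux.chain Ω hΩ K hK T hT1).mp hPT
      obtain ⟨S1, h1, h2, h3⟩ := hP1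
      have hReq : R = S1 := by
        apply left_inv_eq_right_inv (a := OrbitAux.Dop Ω 1)
        · rw [OrbitAux.Dop_one]; exact hR₂'
        · exact h1
      intro x hx
      rw [hReq]
      exact h3 x hx
    · intro hRinv
      have hP1 : OrbitAux.P Ω K 1 := by
        refine ⟨R, ?_, ?_, hRinv⟩
        · rw [OrbitAux.Dop_one]; exact hR₁'
        · rw [OrbitAux.Dop_one]; exact hR₂'
      exact OrbitAux.omega_inv Ω hΩ K hK
        (fun t ht => (OrbitAux.chain Ω hΩ K hK t ht).mpr hP1) 
  rw [orbit, hseteq]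
end

section
/- Let H = H₁ ⊕ H₂ and let Ω be the bounded self-adjoint operator with block form [[Ω₁, Γ],[Γ†, Ω₂]]. Define H₂c by O_Ω(H₁) = H₁ ⊕ H₂c. Then H₂c = O_{Ω₂}(Ran Γ†), the orbit of the closure of the range of Γ† under Ω₂. -/
open ContinuousLinearMap MeasureTheory

section OrbitLemmas

variable {H : Type*} [NormedAddCommGroup H] [InnerProductSpace ℂ H]

lemma subset_orbit (Ω : H →L[ℂ] H) (S : Set H) : S ⊆ (orbit Ω S : Set H) :=
  fun _ hx => Submodule.mem_sInf.2 fun _ hK => hK.1 hx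

lemma isClosed_orbit (Ω : H →L[ℂ] H) (S : Set H) : IsClosed ((orbit Ω S : Submodule ℂ H) : Set H) := by
  rw [orbit, Submodule.coe_sInf]
  exact isClosed_biInter fun K hK => hK.2.1

lemma orbit_invariant (Ω : H →L[ℂ] H) (S : Set H) {x : H} (hx : x ∈ orbit Ω S) :
    Ω x ∈ orbit Ω S :=
  Submodule.mem_sInf.2 fun K hK => hK.2.2 x (Submodule.mem_sInf.1 hx K hK)

lemma orbit_le (Ω : H →L[ℂ] H) (S : Set H) {K : Submodule ℂ H}
    (h1 : S ⊆ K) (h2 : IsClosed (K : Set H)) (h3 : ∀ x ∈ K, Ω x ∈ K) :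
    orbit Ω S ≤ K :=
  sInf_le ⟨h1, h2, h3⟩

end OrbitLemmas

variable {H₁ H₂ : Type*} [NormedAddCommGroup H₁] [InnerProductSpace ℂ H₁] [CompleteSpace H₁]
  [NormedAddCommGroup H₂] [InnerProductSpace ℂ H₂] [CompleteSpace H₂]

/-- Inclusion of `H₁` into the Hilbert space direct sum `H₁ ⊕ H₂`. -/
noncomputable def inl' : H₁ →L[ℂ] WithLp 2 (H₁ × H₂) :=
  (WithLp.prodContinuousLinearEquiv 2 ℂ H₁ H₂).symm.toContinuousLinearMap ∘L
    ContinuousLinearMap.inl ℂ H₁ H₂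

/-- Inclusion of `H₂` into the Hilbert space direct sum `H₁ ⊕ H₂`. -/
noncomputable def inr' : H₂ →L[ℂ] WithLp 2 (H₁ × H₂) :=
  (WithLp.prodContinuousLinearEquiv 2 ℂ H₁ H₂).symm.toContinuousLinearMap ∘L
    ContinuousLinearMap.inr ℂ H₁ H₂

/-- The block operator `[[Ω₁, Γ], [Γ†, Ω₂]]` on `H₁ ⊕ H₂`. -/
noncomputable def blockOp (Ω₁ : H₁ →L[ℂ] H₁) (Ω₂ : H₂ →L[ℂ] H₂) (Γ : H₂ →L[ℂ] H₁) :
    WithLp 2 (H₁ × H₂) →L[ℂ] WithLp 2 (H₁ × H₂) :=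
  (WithLp.prodContinuousLinearEquiv 2 ℂ H₁ H₂).symm.toContinuousLinearMap ∘L
    ((Ω₁ ∘L ContinuousLinearMap.fst ℂ H₁ H₂ + Γ ∘L ContinuousLinearMap.snd ℂ H₁ H₂).prod
      ((ContinuousLinearMap.adjoint Γ) ∘L ContinuousLinearMap.fst ℂ H₁ H₂ +
        Ω₂ ∘L ContinuousLinearMap.snd ℂ H₁ H₂)) ∘L
    (WithLp.prodContinuousLinearEquiv 2 ℂ H₁ H₂).toContinuousLinearMap

/-- `H₁` as a subspace of `H₁ ⊕ H₂`. -/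
noncomputable def sub1 : Submodule ℂ (WithLp 2 (H₁ × H₂)) := LinearMap.range ((inl' : H₁ →L[ℂ] WithLp 2 (H₁ × H₂)) : H₁ →ₗ[ℂ] WithLp 2 (H₁ × H₂))

/-- `H₂` as a subspace of `H₁ ⊕ H₂`. -/
noncomputable def sub2 : Submodule ℂ (WithLp 2 (H₁ × H₂)) := LinearMap.range ((inr' : H₂ →L[ℂ] WithLp 2 (H₁ × H₂)) : H₂ →ₗ[ℂ] WithLp 2 (H₁ × H₂))

section Aux

lemma blockOp_apply (Ω₁ : H₁ →L[ℂ] H₁) (Ω₂ : H₂ →L[ℂ] H₂) (Γ : H₂ →L[ℂ] H₁)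
    (z : WithLp 2 (H₁ × H₂)) :
    blockOp Ω₁ Ω₂ Γ z =
      (WithLp.equiv 2 (H₁ × H₂)).symm
        (Ω₁ z.fst + Γ z.snd, (ContinuousLinearMap.adjoint Γ) z.fst + Ω₂ z.snd) := rfl

lemma inl'_apply (x : H₁) : (inl' x : WithLp 2 (H₁ × H₂)) = (WithLp.equiv 2 _).symm (x, 0) := rfl
lemma inr'_apply (y : H₂) : (inr' y : WithLp 2 (H₁ × H₂)) = (WithLp.equiv 2 _).symm (0, y) := rfl

lemma fst_eq_zero_of_mem_orthogonal {z : WithLp 2 (H₁ × H₂)}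
    (hz : z ∈ (sub1 : Submodule ℂ (WithLp 2 (H₁ × H₂)))ᗮ) : z.fst = 0 := by
  have h := (Submodule.mem_orthogonal _ _).1 hz (inl' z.fst) ⟨z.fst, rfl⟩
  rw [inl'_apply] at h
  simp only [WithLp.prod_inner_apply, WithLp.equiv_symm_apply, WithLp.toLp_fst, WithLp.toLp_snd,
    inner_zero_left, add_zero] at h
  exact inner_self_eq_zero.1 h

lemma inr'_mem_orthogonal (y : H₂) :
    (inr' y : WithLp 2 (H₁ × H₂)) ∈ (sub1 : Submodule ℂ (WithLp 2 (H₁ × H₂)))ᗮ := by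
  rw [Submodule.mem_orthogonal]
  rintro u ⟨x, rfl⟩
  rw [ContinuousLinearMap.coe_coe, inl'_apply, inr'_apply]
  simp [WithLp.prod_inner_apply]

lemma mem_sub1 (x : H₁) : (inl' x : WithLp 2 (H₁ × H₂)) ∈ (sub1 : Submodule ℂ (WithLp 2 (H₁ × H₂))) :=
  ⟨x, rfl⟩

end Aux

/-- with `Ω = [[Ω₁, Γ], [Γ†, Ω₂]]` and `H₂c` defined by
`O_Ω(H₁) = H₁ ⊕ H₂c`, one has `H₂c = O_{Ω₂}(Ran Γ†)`. -/
theorem coupled_part_eq_orbit_range_adjoint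
    (Ω₁ : H₁ →L[ℂ] H₁) (Ω₂ : H₂ →L[ℂ] H₂) (Γ : H₂ →L[ℂ] H₁)
    (hΩ₁ : IsSelfAdjoint Ω₁) (hΩ₂ : IsSelfAdjoint Ω₂) :
    orbit (blockOp Ω₁ Ω₂ Γ) (sub1 : Submodule ℂ (WithLp 2 (H₁ × H₂))) ⊓ (sub1 : Submodule ℂ (WithLp 2 (H₁ × H₂)))ᗮ =
      Submodule.map ((inr' : H₂ →L[ℂ] WithLp 2 (H₁ × H₂)) : H₂ →ₗ[ℂ] WithLp 2 (H₁ × H₂))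
        (orbit Ω₂ (Set.range (ContinuousLinearMap.adjoint Γ))) := by
  set A := ContinuousLinearMap.adjoint Γ with hA
  set K₂ := orbit Ω₂ (Set.range A) with hK₂
  set K := orbit (blockOp Ω₁ Ω₂ Γ) (sub1 : Submodule ℂ (WithLp 2 (H₁ × H₂))) with hK
  -- H₁ ⊆ K
  have hsub1K : ∀ x : H₁, (inl' x : WithLp 2 (H₁ × H₂)) ∈ K :=
    fun x => subset_orbit _ _ (mem_sub1 x)
  -- the set M = {y | inr' y ∈ K} is a closed Ω₂-invariant submodule containing Ran A
  have hMinvK : ∀ y : H₂, (inr' y : WithLp 2 (H₁ × H₂)) ∈ K → (inr' (Ω₂ y) : WithLp 2 (H₁ × H₂)) ∈ K := by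
    intro y hy
    have h1 : blockOp Ω₁ Ω₂ Γ (inr' y) ∈ K := orbit_invariant _ _ hy
    have h2 : blockOp Ω₁ Ω₂ Γ (inr' y) = inl' (Γ y) + inr' (Ω₂ y) := by
      rw [blockOp_apply, inl'_apply, inr'_apply]
      apply WithLp.ofLp_injective; apply Prod.ext <;> simp <;> rfl
    rw [h2] at h1
    have := K.sub_mem h1 (hsub1K (Γ y))
    simpa using this
  have hRanA : ∀ x : H₁, (inr' (A x) : WithLp 2 (H₁ × H₂)) ∈ K := by
    intro x
    have h1 : blockOp Ω₁ Ω₂ Γ (inl' x) ∈ K := orbit_invariant _ _ (hsub1K x)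
    have h2 : blockOp Ω₁ Ω₂ Γ (inl' x) = inl' (Ω₁ x) + inr' (A x) := by
      rw [blockOp_apply, inl'_apply, inl'_apply, inr'_apply]
      apply WithLp.ofLp_injective; apply Prod.ext <;> simp <;> rfl
    rw [h2] at h1
    have := K.sub_mem h1 (hsub1K (Ω₁ x))
    simpa using this
  -- K₂ ⊆ M
  have hK₂M : ∀ y ∈ K₂, (inr' y : WithLp 2 (H₁ × H₂)) ∈ K := by
    intro y hy
    refine orbit_le Ω₂ (Set.range A) (K := (K.comap ((inr' : H₂ →L[ℂ] WithLp 2 (H₁ × H₂)) : H₂ →ₗ[ℂ] WithLp 2 (H₁ × H₂)))) ?_ ?_ ?_ hy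
    · rintro _ ⟨x, rfl⟩; exact hRanA x
    · exact IsClosed.preimage (f := fun y : H₂ => (inr' y : WithLp 2 (H₁ × H₂)))
        (inr' : H₂ →L[ℂ] WithLp 2 (H₁ × H₂)).continuous
        (isClosed_orbit (blockOp Ω₁ Ω₂ Γ) (sub1 : Submodule ℂ (WithLp 2 (H₁ × H₂))))
    · exact fun z hz => hMinvK z hz
  -- K ⊆ {z | z.2 ∈ K₂}
  have hKW : ∀ z ∈ K, z.snd ∈ K₂ := by
    intro z hz
    have hW : K ≤ (K₂.comap ((ContinuousLinearMap.snd ℂ H₁ H₂) ∘L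
        (WithLp.prodContinuousLinearEquiv 2 ℂ H₁ H₂).toContinuousLinearMap : WithLp 2 (H₁ × H₂) →ₗ[ℂ] H₂)) := by
      refine orbit_le _ _ ?_ ?_ ?_
      · rintro _ ⟨x, rfl⟩
        show (0 : H₂) ∈ K₂
        exact K₂.zero_mem
      · exact (isClosed_orbit _ _).preimage (Continuous.comp (ContinuousLinearMap.snd ℂ H₁ H₂).continuous
          (WithLp.prodContinuousLinearEquiv 2 ℂ H₁ H₂).continuous)
      · intro w hw
        show (blockOp Ω₁ Ω₂ Γ w).snd ∈ K₂
        have : (blockOp Ω₁ Ω₂ Γ w).snd = A w.fst + Ω₂ w.snd := rfl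
        rw [this]
        exact K₂.add_mem (subset_orbit _ _ ⟨w.fst, rfl⟩) (orbit_invariant _ _ hw)
    exact hW hz
  apply le_antisymm
  · rintro z ⟨hzK, hzO⟩
    refine ⟨z.snd, hKW z hzK, ?_⟩
    have h1 : z.fst = 0 := fst_eq_zero_of_mem_orthogonal hzO
    rw [ContinuousLinearMap.coe_coe, inr'_apply]
    apply WithLp.ofLp_injective; apply Prod.ext
    · simpa using h1.symm
    · rfl
  · rintro _ ⟨y, hy, rfl⟩
    exact ⟨hK₂M y hy, inr'_mem_orthogonal y⟩
end
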